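/- Let φ₁, φ₂, φ₃, φ₄ : ℤ³ → ℤ be the homomorphisms given (as row vectors on the standard basis) by φ₁ = (1, 1, 1), φ₂ = (3, 5, 2), φ₃ = (3, 7, 3), φ₄ = (2, 1, 3). Then R(φ₁, φ₂, φ₃, φ₄) = 10, R(φ₁, φ₂, φ₃) = 2, R(φ₁, φ₂, φ₄) = 1, R(φ₁, φ₃, φ₄) = 2, and the product R(φ₁, φ₂, φ₃)·R(φ₁, φ₂, φ₄)·R(φ₁, φ₃, φ₄) = 4 does not divide R(φ₁, φ₂, φ₃, φ₄) = 10. In particular, the product of the Reidemeister numbers of all (k−1)-element subfamilies need not divide R(φ₁, …, φ_k) when k = 4. -/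
import Mathlib


/-- The relation on pairs defining the Reidemeister classes of a triple of homomorphisms
`φ₁ φ₂ φ₃ : G →+ A` (the first listed homomorphism playing the distinguished role). -/
def tcRel₃Add {G A : Type*} [AddGroup G] [AddGroup A] (φ₁ φ₂ φ₃ : G →+ A)
    (a b : A × A) : Prop :=
  ∃ z : G, b.1 = φ₁ z + a.1 - φ₂ z ∧ b.2 = φ₁ z + a.2 - φ₃ z

/-- The relation on triples defining the Reidemeister classes of a quadruple of
homomorphisms `φ₁ φ₂ φ₃ φ₄ : G →+ A`. -/
def tcRel₄Add {G A : Type*} [AddGroup G] [AddGroup A] (φ₁ φ₂ φ₃ φ₄ : G →+ A)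
    (a b : A × A × A) : Prop :=
  ∃ z : G, b.1 = φ₁ z + a.1 - φ₂ z ∧ b.2.1 = φ₁ z + a.2.1 - φ₃ z ∧
    b.2.2 = φ₁ z + a.2.2 - φ₄ z

/-- Let `φ₁, φ₂, φ₃, φ₄ : ℤ³ → ℤ` be given by the row vectors `(1,1,1)`, `(3,5,2)`,
`(3,7,3)`, `(2,1,3)`.  Then `R(φ₁,φ₂,φ₃,φ₄) = 10`, `R(φ₁,φ₂,φ₃) = 2`, `R(φ₁,φ₂,φ₄) = 1`,
`R(φ₁,φ₃,φ₄) = 2`, and the product `R(φ₁,φ₂,φ₃)·R(φ₁,φ₂,φ₄)·R(φ₁,φ₃,φ₄) = 4` does not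
divide `R(φ₁,φ₂,φ₃,φ₄) = 10`. -/
lemma card_quot_eq {α : Type*} (r : α → α → Prop) (n : ℕ) [NeZero n] (g : α → ZMod n)
    (hg : ∀ a b, r a b → g a = g b)
    (sec : ZMod n → α) (hsec : ∀ m, g (sec m) = m)
    (hinj : ∀ a b, g a = g b → r a b) :
    Nat.card (Quot r) = n := by
  have e : Quot r ≃ ZMod n :=
    Equiv.ofBijective (Quot.lift g hg)
      ⟨by rintro ⟨a⟩ ⟨b⟩ h; exact Quot.sound (hinj a b h),
       fun m => ⟨Quot.mk r (sec m), hsec m⟩⟩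
  rw [Nat.card_congr e, Nat.card_zmod]

theorem reidemeister_quadruple_example (φ₁ φ₂ φ₃ φ₄ : (Fin 3 → ℤ) →+ ℤ)
    (h₁ : ∀ x, φ₁ x = 1 * x 0 + 1 * x 1 + 1 * x 2)
    (h₂ : ∀ x, φ₂ x = 3 * x 0 + 5 * x 1 + 2 * x 2)
    (h₃ : ∀ x, φ₃ x = 3 * x 0 + 7 * x 1 + 3 * x 2)
    (h₄ : ∀ x, φ₄ x = 2 * x 0 + 1 * x 1 + 3 * x 2) :
    Nat.card (Quot (tcRel₄Add φ₁ φ₂ φ₃ φ₄)) = 10 ∧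
    Nat.card (Quot (tcRel₃Add φ₁ φ₂ φ₃)) = 2 ∧
    Nat.card (Quot (tcRel₃Add φ₁ φ₂ φ₄)) = 1 ∧
    Nat.card (Quot (tcRel₃Add φ₁ φ₃ φ₄)) = 2 ∧
    ¬ (Nat.card (Quot (tcRel₃Add φ₁ φ₂ φ₃)) * Nat.card (Quot (tcRel₃Add φ₁ φ₂ φ₄)) *
        Nat.card (Quot (tcRel₃Add φ₁ φ₃ φ₄)) ∣ Nat.card (Quot (tcRel₄Add φ₁ φ₂ φ₃ φ₄))) := by
  have C4 : Nat.card (Quot (tcRel₄Add φ₁ φ₂ φ₃ φ₄)) = 10 := by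
    refine card_quot_eq _ 10
      (fun p => ((-2 * p.1 + 3 * p.2.1 - 2 * p.2.2 : ℤ) : ZMod 10)) ?_
      (fun m => (0, (7 * m.val : ℤ), 0)) ?_ ?_
    · rintro a b ⟨z, hb1, hb2, hb3⟩
      rw [ZMod.intCast_eq_intCast_iff, Int.modEq_iff_dvd]
      refine ⟨-(z 1), ?_⟩
      have e1 := h₁ z; have e2 := h₂ z; have e3 := h₃ z; have e4 := h₄ z
      omega
    · intro m
      have : ((m.val : ℤ) : ZMod 10) = m := by push_cast; simp [ZMod.natCast_val, ZMod.cast_id]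
      push_cast
      rw [show ((0:ZMod 10) + 3 * (7 * (m.val:ZMod 10)) - 0 = 21 * (m.val:ZMod 10)) by ring,
        show (21 : ZMod 10) = 1 by decide, one_mul]
      exact_mod_cast this
    · intro a b h
      rw [ZMod.intCast_eq_intCast_iff] at h
      obtain ⟨k, hk⟩ := h.dvd
      refine ⟨![6*k - (b.2.1 - a.2.1) + (b.2.2 - a.2.2), -k,
        2*k + (b.1 - a.1) - (b.2.1 - a.2.1)], ?_, ?_, ?_⟩ <;>
      · have e1 := h₁ (![6*k - (b.2.1 - a.2.1) + (b.2.2 - a.2.2), -k,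
          2*k + (b.1 - a.1) - (b.2.1 - a.2.1)]); have e2 := h₂ (![6*k - (b.2.1 - a.2.1) + (b.2.2 - a.2.2), -k,
          2*k + (b.1 - a.1) - (b.2.1 - a.2.1)]); have e3 := h₃ (![6*k - (b.2.1 - a.2.1) + (b.2.2 - a.2.2), -k,
          2*k + (b.1 - a.1) - (b.2.1 - a.2.1)]); have e4 := h₄ (![6*k - (b.2.1 - a.2.1) + (b.2.2 - a.2.2), -k,
          2*k + (b.1 - a.1) - (b.2.1 - a.2.1)])
        simp only [Matrix.cons_val_zero, Matrix.cons_val_one, Matrix.head_cons,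
          Matrix.cons_val_two, Matrix.tail_cons] at e1 e2 e3 e4
        omega
  have C23 : Nat.card (Quot (tcRel₃Add φ₁ φ₂ φ₃)) = 2 := by
    refine card_quot_eq _ 2 (fun p => ((p.2 : ℤ) : ZMod 2)) ?_
      (fun m => (0, (m.val : ℤ))) ?_ ?_
    · rintro a b ⟨z, hb1, hb2⟩
      rw [ZMod.intCast_eq_intCast_iff, Int.modEq_iff_dvd]
      refine ⟨-(z 0) - 3*(z 1) - (z 2), ?_⟩
      have e1 := h₁ z; have e3 := h₃ z
      omega
    · intro m; push_cast; simp [ZMod.natCast_val, ZMod.cast_id]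
    · intro a b h
      rw [ZMod.intCast_eq_intCast_iff] at h
      obtain ⟨k, hk⟩ := h.dvd
      refine ⟨![k - (b.1 - a.1), 0, (b.1 - a.1) - 2*k], ?_, ?_⟩ <;>
      · have e1 := h₁ (![k - (b.1 - a.1), 0, (b.1 - a.1) - 2*k]); have e2 := h₂ (![k - (b.1 - a.1), 0, (b.1 - a.1) - 2*k]); have e3 := h₃ (![k - (b.1 - a.1), 0, (b.1 - a.1) - 2*k])
        simp only [Matrix.cons_val_zero, Matrix.cons_val_one, Matrix.head_cons,
          Matrix.cons_val_two, Matrix.tail_cons] at e1 e2 e3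
        omega
  have C24 : Nat.card (Quot (tcRel₃Add φ₁ φ₂ φ₄)) = 1 := by
    refine card_quot_eq _ 1 (fun _ => (0 : ZMod 1)) (fun _ _ _ => rfl)
      (fun _ => (0, 0)) (fun m => Subsingleton.elim _ _) ?_
    intro a b _
    refine ⟨![2*(b.1 - a.1) - 5*(b.2 - a.2), 2*(b.2 - a.2) - (b.1 - a.1),
      2*(b.2 - a.2) - (b.1 - a.1)], ?_, ?_⟩ <;>
    · have e1 := h₁ (![2*(b.1 - a.1) - 5*(b.2 - a.2), 2*(b.2 - a.2) - (b.1 - a.1),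
        2*(b.2 - a.2) - (b.1 - a.1)]); have e2 := h₂ (![2*(b.1 - a.1) - 5*(b.2 - a.2), 2*(b.2 - a.2) - (b.1 - a.1),
        2*(b.2 - a.2) - (b.1 - a.1)]); have e4 := h₄ (![2*(b.1 - a.1) - 5*(b.2 - a.2), 2*(b.2 - a.2) - (b.1 - a.1),
        2*(b.2 - a.2) - (b.1 - a.1)])
      simp only [Matrix.cons_val_zero, Matrix.cons_val_one, Matrix.head_cons,
        Matrix.cons_val_two, Matrix.tail_cons] at e1 e2 e4
      omega
  have C34 : Nat.card (Quot (tcRel₃Add φ₁ φ₃ φ₄)) = 2 := by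
    refine card_quot_eq _ 2 (fun p => ((p.1 : ℤ) : ZMod 2)) ?_
      (fun m => ((m.val : ℤ), 0)) ?_ ?_
    · rintro a b ⟨z, hb1, hb2⟩
      rw [ZMod.intCast_eq_intCast_iff, Int.modEq_iff_dvd]
      refine ⟨-(z 0) - 3*(z 1) - (z 2), ?_⟩
      have e1 := h₁ z; have e3 := h₃ z
      omega
    · intro m; push_cast; simp [ZMod.natCast_val, ZMod.cast_id]
    · intro a b h
      rw [ZMod.intCast_eq_intCast_iff] at h
      obtain ⟨k, hk⟩ := h.dvd
      refine ⟨![(b.2 - a.2) - 2*k, 0, k - (b.2 - a.2)], ?_, ?_⟩ <;>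
      · have e1 := h₁ (![(b.2 - a.2) - 2*k, 0, k - (b.2 - a.2)]); have e3 := h₃ (![(b.2 - a.2) - 2*k, 0, k - (b.2 - a.2)]); have e4 := h₄ (![(b.2 - a.2) - 2*k, 0, k - (b.2 - a.2)])
        simp only [Matrix.cons_val_zero, Matrix.cons_val_one, Matrix.head_cons,
          Matrix.cons_val_two, Matrix.tail_cons] at e1 e3 e4
        omega
  refine ⟨C4, C23, C24, C34, ?_⟩
  rw [C4, C23, C24, C34]
  omega
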